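/- arXiv:2012.15384 — 4 statements merged into one kernel-verified Lean document; each statement's English description precedes it below -/
import Mathlib

section
/- The map σ sending (x, g) to (-1)^{inv_x(g)}, where inv_x(g) is the number of transpositions (i,j) in the cycle decomposition of the involution x (with i<j) such that g(i)>g(j), is multiplicative: for involutions x₁, x₂ in Sₙ with x₁ = g₂ x₂ g₂⁻¹, one has σ(x₂, g₁g₂) = σ(x₂, g₂) · σ(x₁, g₁). -/
noncomputable section

/-- `invx x g` is the number of pairs `(i,j)` with `i < j`, `x i = j`, `x j = i`
(i.e. transpositions `(i,j)` in the cycle decomposition of the involution `x`)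
such that `g i > g j`. -/
def invx {n : ℕ} (x g : Equiv.Perm (Fin n)) : ℕ :=
  (Finset.univ.filter (fun p : Fin n × Fin n =>
    p.1 < p.2 ∧ x p.1 = p.2 ∧ x p.2 = p.1 ∧ g p.2 < g p.1)).card

lemma neg_one_pow_invx {n : ℕ} (x g : Equiv.Perm (Fin n)) :
    ((-1 : ℤ)) ^ invx x g =
      ∏ p ∈ Finset.univ.filter (fun p : Fin n × Fin n =>
        p.1 < p.2 ∧ x p.1 = p.2 ∧ x p.2 = p.1),
        (if g p.2 < g p.1 then (-1 : ℤ) else 1) := by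
  rw [Finset.prod_ite, Finset.prod_const, Finset.prod_const, one_pow, mul_one,
    Finset.filter_filter, invx]
  congr 2
  ext p
  simp [and_assoc]

/-- Multiplicativity of `σ(x,g) = (-1)^{inv_x(g)}`: for involutions `x₁, x₂` in `Sₙ`
with `x₁ = g₂ x₂ g₂⁻¹`, one has `σ(x₂, g₁ g₂) = σ(x₂, g₂) · σ(x₁, g₁)`. -/
theorem sigma_multiplicative {n : ℕ} (x₁ x₂ g₁ g₂ : Equiv.Perm (Fin n))
    (hx₂ : x₂ ^ 2 = 1) (hx₁ : x₁ = g₂ * x₂ * g₂⁻¹) :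
    ((-1 : ℤ)) ^ invx x₂ (g₁ * g₂) = (-1 : ℤ) ^ invx x₂ g₂ * (-1 : ℤ) ^ invx x₁ g₁ := by
  rw [neg_one_pow_invx, neg_one_pow_invx, neg_one_pow_invx]
  set S := Finset.univ.filter (fun p : Fin n × Fin n =>
    p.1 < p.2 ∧ x₂ p.1 = p.2 ∧ x₂ p.2 = p.1) with hS
  set T := Finset.univ.filter (fun p : Fin n × Fin n =>
    p.1 < p.2 ∧ x₁ p.1 = p.2 ∧ x₁ p.2 = p.1) with hT
  have key : ∏ q ∈ T, (if g₁ q.2 < g₁ q.1 then (-1 : ℤ) else 1) =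
      ∏ p ∈ S, ((if g₂ p.2 < g₂ p.1 then (-1 : ℤ) else 1) *
        (if g₁ (g₂ p.2) < g₁ (g₂ p.1) then (-1 : ℤ) else 1)) := by
    refine (Finset.prod_nbij' (fun p => if g₂ p.1 < g₂ p.2 then (g₂ p.1, g₂ p.2) else (g₂ p.2, g₂ p.1))
      (fun q => if g₂⁻¹ q.1 < g₂⁻¹ q.2 then (g₂⁻¹ q.1, g₂⁻¹ q.2) else (g₂⁻¹ q.2, g₂⁻¹ q.1))
      ?_ ?_ ?_ ?_ ?_).symm
    · -- maps S to T
      intro p hp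
      simp only [hS, Finset.mem_filter, Finset.mem_univ, true_and] at hp
      obtain ⟨hlt, h1, h2⟩ := hp
      have hx1a : x₁ (g₂ p.1) = g₂ p.2 := by
        simp [hx₁, Equiv.Perm.mul_apply, h1]
      have hx1b : x₁ (g₂ p.2) = g₂ p.1 := by
        simp [hx₁, Equiv.Perm.mul_apply, h2]
      have hne : g₂ p.1 ≠ g₂ p.2 := fun h => hlt.ne (g₂.injective h)
      by_cases h : g₂ p.1 < g₂ p.2
      · simp only [if_pos h]
        simp only [hT, Finset.mem_filter, Finset.mem_univ, true_and]
        exact ⟨h, hx1a, hx1b⟩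
      · simp only [if_neg h]
        simp only [hT, Finset.mem_filter, Finset.mem_univ, true_and]
        exact ⟨lt_of_le_of_ne (not_lt.mp h) hne.symm, hx1b, hx1a⟩
    · -- maps T to S
      intro q hq
      simp only [hT, Finset.mem_filter, Finset.mem_univ, true_and] at hq
      obtain ⟨hlt, h1, h2⟩ := hq
      have hx2a : x₂ (g₂⁻¹ q.1) = g₂⁻¹ q.2 := by
        have : x₂ = g₂⁻¹ * x₁ * g₂ := by rw [hx₁]; group
        simp [this, Equiv.Perm.mul_apply, h1]
      have hx2b : x₂ (g₂⁻¹ q.2) = g₂⁻¹ q.1 := by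
        have : x₂ = g₂⁻¹ * x₁ * g₂ := by rw [hx₁]; group
        simp [this, Equiv.Perm.mul_apply, h2]
      have hne : g₂⁻¹ q.1 ≠ g₂⁻¹ q.2 := fun h => hlt.ne (g₂⁻¹.injective h)
      by_cases h : g₂⁻¹ q.1 < g₂⁻¹ q.2
      · simp only [if_pos h]
        simp only [hS, Finset.mem_filter, Finset.mem_univ, true_and]
        exact ⟨h, hx2a, hx2b⟩
      · simp only [if_neg h]
        simp only [hS, Finset.mem_filter, Finset.mem_univ, true_and]
        exact ⟨lt_of_le_of_ne (not_lt.mp h) hne.symm, hx2b, hx2a⟩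
    · -- left inverse
      intro p hp
      simp only [hS, Finset.mem_filter, Finset.mem_univ, true_and] at hp
      obtain ⟨hlt, -, -⟩ := hp
      by_cases h : g₂ p.1 < g₂ p.2
      · simp [h, hlt, hlt.not_gt]
      · have hne : g₂ p.1 ≠ g₂ p.2 := fun h' => hlt.ne (g₂.injective h')
        have h' : g₂ p.2 < g₂ p.1 := lt_of_le_of_ne (not_lt.mp h) hne.symm
        simp [h, hlt, hlt.not_gt]
    · -- right inverse
      intro q hq
      simp only [hT, Finset.mem_filter, Finset.mem_univ, true_and] at hq
      obtain ⟨hlt, -, -⟩ := hq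
      by_cases h : g₂⁻¹ q.1 < g₂⁻¹ q.2
      · rw [Equiv.Perm.inv_def] at h
        simp [h, hlt, hlt.not_gt]
      · rw [Equiv.Perm.inv_def] at h
        simp [h, hlt, hlt.not_gt]
    · -- values agree
      intro p hp
      simp only [hS, Finset.mem_filter, Finset.mem_univ, true_and] at hp
      obtain ⟨hlt, -, -⟩ := hp
      have hne : g₁ (g₂ p.1) ≠ g₁ (g₂ p.2) :=
        fun h => hlt.ne (g₂.injective (g₁.injective h))
      by_cases h : g₂ p.1 < g₂ p.2
      · simp only [h, if_pos, if_true]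
        rw [if_neg (not_lt.mpr h.le), one_mul]
      · have hne2 : g₂ p.1 ≠ g₂ p.2 := fun h' => hlt.ne (g₂.injective h')
        have h' : g₂ p.2 < g₂ p.1 := lt_of_le_of_ne (not_lt.mp h) hne2.symm
        simp only [h, if_neg, if_false]
        rw [if_pos h']
        rcases lt_or_gt_of_ne hne with h2 | h2
        · rw [if_neg (not_lt.mpr h2.le), if_pos h2]; ring
        · rw [if_pos h2, if_neg (not_lt.mpr h2.le)]; ring
  rw [key, ← Finset.prod_mul_distrib]
  apply Finset.prod_congr rfl
  intro p hp
  simp only [Equiv.Perm.mul_apply]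
  by_cases ha : g₂ p.2 < g₂ p.1 <;> by_cases hb : g₁ (g₂ p.2) < g₁ (g₂ p.1) <;>
    simp [ha, hb]
end
end

section
/- For G = S₄ acting by conjugation on the set X of its ten involutions (including the identity), the representation Ind_{C_G((12))}^G(sgn ⊗ 1) ⊕ Ind_{C_G((12)(34))}^G(sign) ⊕ 1, where the inducing characters are the restrictions of the twisting character σ described below, is a Gelfand model for S₄: it contains every irreducible representation of S₄ with multiplicity exactly one. -/
noncomputable section
open CategoryTheory
open scoped Classical

/-- The character of the representation of a finite group `G` induced from the function
`φ` on the subgroup `H` (the Frobenius formula). -/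
def IndChar (G : Type) [Group G] [Fintype G] (H : Subgroup G) (φ : G → ℂ) (g : G) : ℂ :=
  (Nat.card H : ℂ)⁻¹ * ∑ x : G, if x⁻¹ * g * x ∈ H then φ (x⁻¹ * g * x) else 0

/-- The character `sgn ⊗ 1` of the centralizer `{1,(12),(34),(12)(34)}` of `(12)` in
`S₄`: it is `-1` exactly on `(12)` and `(12)(34)`. -/
def sgnTensorOne (g : Equiv.Perm (Fin 4)) : ℂ :=
  if g = Equiv.swap 0 1 ∨ g = Equiv.swap 0 1 * Equiv.swap 2 3 then -1 else 1

/-- The restriction to a subgroup of the sign character of `S₄`. -/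
def signChar (g : Equiv.Perm (Fin 4)) : ℂ := ((Equiv.Perm.sign g : ℤ) : ℂ)

/-- The character of the geometrically induced representation
`Ind_{C_G((12))}^{S₄}(sgn ⊗ 1) ⊕ Ind_{C_G((12)(34))}^{S₄}(sign) ⊕ 1`. -/
def gelfandModelCharS4 (g : Equiv.Perm (Fin 4)) : ℂ :=
  IndChar (Equiv.Perm (Fin 4)) (Subgroup.centralizer {Equiv.swap 0 1}) sgnTensorOne g +
  IndChar (Equiv.Perm (Fin 4))
    (Subgroup.centralizer {Equiv.swap 0 1 * Equiv.swap 2 3}) signChar g + 1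

/-! ### Auxiliary material for the proof -/

namespace GelfandS4Aux

open Equiv Finset

abbrev G4 := Equiv.Perm (Fin 4)

/-- number of fixed points -/
def fx (g : G4) : ℕ := #(univ.filter (fun i => g i = i))

/-- the transpositions -/
def TRs : Finset G4 := univ.filter (fun g => g * g = 1 ∧ fx g = 2)
/-- the double transpositions -/
def DTs : Finset G4 := univ.filter (fun g => g * g = 1 ∧ g ≠ 1 ∧ fx g = 0)
/-- the 3-cycles -/
def C3s : Finset G4 := univ.filter (fun g => g ^ 3 = 1 ∧ g ≠ 1)
/-- the 4-cycles -/
def C4s : Finset G4 := univ.filter (fun g => g ^ 4 = 1 ∧ g * g ≠ 1)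

def t₀ : G4 := Equiv.swap 0 1
def d₀ : G4 := Equiv.swap 0 1 * Equiv.swap 2 3
def c₀ : G4 := Equiv.swap 0 1 * Equiv.swap 1 2
def q₀ : G4 := Equiv.swap 0 1 * Equiv.swap 1 2 * Equiv.swap 2 3

def cnt (A B : Finset G4) (g : G4) : ℕ := #((A ×ˢ B).filter (fun p => p.1 * p.2 = g))

def coef (k0 kt k2 k3 k4 : ℕ) (g : G4) : ℕ :=
  (if g = 1 then k0 else 0) + (if g ∈ TRs then kt else 0) + (if g ∈ DTs then k2 else 0) +
  (if g ∈ C3s then k3 else 0) + (if g ∈ C4s then k4 else 0)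

def w1 (y : G4) : ℤ := if t₀ * y = y * t₀ then (if y = t₀ ∨ y = d₀ then -1 else 1) else 0
def w2 (y : G4) : ℤ := if d₀ * y = y * d₀ then (if Equiv.Perm.sign y = 1 then 1 else -1) else 0
def S1 (g : G4) : ℤ := ∑ x : G4, w1 (x⁻¹ * g * x)
def S2 (g : G4) : ℤ := ∑ x : G4, w2 (x⁻¹ * g * x)
def e0 (g : G4) : ℤ :=
  (if g = 1 then 10 else 0) + (if g ∈ DTs then 2 else 0) + (if g ∈ C3s then 1 else 0)

set_option maxRecDepth 40000

/-! #### Finite computations, verified by `decide` -/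

theorem keyval : ∀ g : G4, 2 * S1 g + S2 g + 8 = 8 * e0 g := by decide

theorem cntDD : ∀ g, cnt DTs DTs g = coef 3 0 2 0 0 g := by decide
theorem cntCC : ∀ g, cnt C3s C3s g = coef 8 0 8 4 0 g := by decide
theorem cntTT : ∀ g, cnt TRs TRs g = coef 6 0 2 3 0 g := by decide
theorem cntTD : ∀ g, cnt TRs DTs g = coef 0 1 0 0 2 g := by decide

theorem closTR : ∀ g h : G4, h ∈ TRs → g * h * g⁻¹ ∈ TRs := by decide
theorem closDT : ∀ g h : G4, h ∈ DTs → g * h * g⁻¹ ∈ DTs := by decide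
theorem closC3 : ∀ g h : G4, h ∈ C3s → g * h * g⁻¹ ∈ C3s := by decide
theorem closC4 : ∀ g h : G4, h ∈ C4s → g * h * g⁻¹ ∈ C4s := by decide

theorem conjTR : ∀ g ∈ TRs, ∃ h : G4, h * t₀ * h⁻¹ = g := by decide
theorem conjDT : ∀ g ∈ DTs, ∃ h : G4, h * d₀ * h⁻¹ = g := by decide
theorem conjC3 : ∀ g ∈ C3s, ∃ h : G4, h * c₀ * h⁻¹ = g := by decide
theorem conjC4 : ∀ g ∈ C4s, ∃ h : G4, h * q₀ * h⁻¹ = g := by decide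

theorem invTR : ∀ g ∈ TRs, g⁻¹ = g := by decide
theorem invDT : ∀ g ∈ DTs, g⁻¹ = g := by decide
theorem invC3 : ∀ g ∈ C3s, g⁻¹ ∈ C3s := by decide
theorem invC4 : ∀ g ∈ C4s, g⁻¹ ∈ C4s := by decide

theorem cardTR : #TRs = 6 := by decide
theorem cardDT : #DTs = 3 := by decide
theorem cardC3 : #C3s = 8 := by decide
theorem cardC4 : #C4s = 6 := by decide

theorem cover : (univ : Finset G4) = {1} ∪ TRs ∪ DTs ∪ C3s ∪ C4s := by decide

theorem disj1 : Disjoint ({1} : Finset G4) TRs :=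
  Finset.disjoint_left.mpr (by decide)
theorem disj2 : Disjoint (({1} : Finset G4) ∪ TRs) DTs :=
  Finset.disjoint_left.mpr (by decide)
theorem disj3 : Disjoint (({1} : Finset G4) ∪ TRs ∪ DTs) C3s :=
  Finset.disjoint_left.mpr (by decide)
theorem disj4 : Disjoint (({1} : Finset G4) ∪ TRs ∪ DTs ∪ C3s) C4s :=
  Finset.disjoint_left.mpr (by decide)

theorem notDT1 : (1 : G4) ∉ DTs := by decide
theorem notC31 : (1 : G4) ∉ C3s := by decide
theorem DTnotC3 : ∀ g : G4, g ∈ DTs → g ∉ C3s := by decide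

/-! #### The value of the Gelfand model character -/

theorem card24 : ((Fintype.card G4 : ℕ) : ℂ) = 24 := by
  rw [Fintype.card_perm]; norm_num [Fintype.card_fin, Nat.factorial]

theorem cardCent1 : Nat.card (Subgroup.centralizer {t₀}) = 4 := by
  rw [Nat.card_congr (Equiv.subtypeEquivRight (fun x : G4 =>
    (Subgroup.mem_centralizer_singleton_iff : x ∈ Subgroup.centralizer {t₀} ↔ _))),
    Nat.card_eq_fintype_card, Fintype.card_subtype]
  decide

theorem cardCent2 : Nat.card (Subgroup.centralizer {d₀}) = 8 := by
  rw [Nat.card_congr (Equiv.subtypeEquivRight (fun x : G4 =>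
    (Subgroup.mem_centralizer_singleton_iff : x ∈ Subgroup.centralizer {d₀} ↔ _))),
    Nat.card_eq_fintype_card, Fintype.card_subtype]
  decide

theorem sum1 (g : G4) :
    ∑ x : G4, (if x⁻¹ * g * x ∈ Subgroup.centralizer {t₀} then sgnTensorOne (x⁻¹ * g * x) else 0)
      = ((S1 g : ℤ) : ℂ) := by
  rw [S1, Int.cast_sum]
  refine Finset.sum_congr rfl fun x _ => ?_
  set y := x⁻¹ * g * x
  by_cases h : y ∈ Subgroup.centralizer {t₀}
  · have h' : t₀ * y = y * t₀ := (Subgroup.mem_centralizer_singleton_iff.mp h).symm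
    rw [if_pos h, w1, if_pos h', sgnTensorOne]
    by_cases h2 : y = t₀ ∨ y = d₀
    · have h2' : y = Equiv.swap 0 1 ∨ y = Equiv.swap 0 1 * Equiv.swap 2 3 := h2
      rw [if_pos h2, if_pos h2']; norm_num
    · have h2' : ¬(y = Equiv.swap 0 1 ∨ y = Equiv.swap 0 1 * Equiv.swap 2 3) := h2
      rw [if_neg h2, if_neg h2']; norm_num
  · have h' : ¬ t₀ * y = y * t₀ := fun hc =>
      h (Subgroup.mem_centralizer_singleton_iff.mpr hc.symm)
    rw [if_neg h, w1, if_neg h']; norm_num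

theorem sum2 (g : G4) :
    ∑ x : G4, (if x⁻¹ * g * x ∈ Subgroup.centralizer {d₀} then signChar (x⁻¹ * g * x) else 0)
      = ((S2 g : ℤ) : ℂ) := by
  rw [S2, Int.cast_sum]
  refine Finset.sum_congr rfl fun x _ => ?_
  set y := x⁻¹ * g * x
  by_cases h : y ∈ Subgroup.centralizer {d₀}
  · have h' : d₀ * y = y * d₀ := (Subgroup.mem_centralizer_singleton_iff.mp h).symm
    rw [if_pos h, w2, if_pos h', signChar]
    rcases Int.units_eq_one_or (Equiv.Perm.sign y) with hs | hs
    · rw [if_pos hs, hs]; norm_num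
    · rw [if_neg (by rw [hs]; decide), hs]; norm_num
  · have h' : ¬ d₀ * y = y * d₀ := fun hc =>
      h (Subgroup.mem_centralizer_singleton_iff.mpr hc.symm)
    rw [if_neg h, w2, if_neg h']; norm_num

theorem charA (g : G4) : gelfandModelCharS4 g = ((e0 g : ℤ) : ℂ) := by
  have kv := keyval g
  rw [gelfandModelCharS4, IndChar, IndChar]
  rw [show Subgroup.centralizer {Equiv.swap 0 1} = Subgroup.centralizer {t₀} from rfl]
  rw [show Subgroup.centralizer {Equiv.swap 0 1 * Equiv.swap 2 3}
      = Subgroup.centralizer {d₀} from rfl]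
  rw [cardCent1, cardCent2, sum1 g, sum2 g]
  have kvc : 2 * (S1 g : ℂ) + (S2 g : ℂ) + 8 = 8 * (e0 g : ℂ) := by exact_mod_cast kv
  linear_combination kvc / 8

/-! #### Class sums and Schur's lemma -/

variable (V : FDRep ℂ G4)

def Tsum (C : Finset G4) : V →ₗ[ℂ] V := ∑ h ∈ C, V.ρ h

theorem Tsum_comm (C : Finset G4) (hC : ∀ g h : G4, h ∈ C → g * h * g⁻¹ ∈ C) (g : G4) :
    (Tsum V C) * (V.ρ g) = (V.ρ g : V →ₗ[ℂ] V) * (Tsum V C) := by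
  unfold Tsum
  rw [Finset.sum_mul, Finset.mul_sum]
  refine Finset.sum_nbij' (fun h => g⁻¹ * h * g) (fun h => g * h * g⁻¹) ?_ ?_ ?_ ?_ ?_
  · intro a ha
    have := hC g⁻¹ a ha; simpa using this
  · intro a ha; exact hC g a ha
  · intro a _; group
  · intro a _; group
  · intro a _
    have h1 : a * g = g * (g⁻¹ * a * g) := by group
    rw [← map_mul, ← map_mul, h1]

theorem exists_scalar (hV : Simple V) (C : Finset G4)
    (hC : ∀ g h : G4, h ∈ C → g * h * g⁻¹ ∈ C) :
    ∃ c : ℂ, Tsum V C = c • (1 : V →ₗ[ℂ] V) := by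
  haveI := hV
  let φ : V ⟶ V := ⟨ObjectProperty.homMk (ModuleCat.ofHom (Tsum V C)), fun g => by
    ext x; exact LinearMap.congr_fun (Tsum_comm V C hC g) x⟩
  obtain ⟨c, hc⟩ := CategoryTheory.endomorphism_simple_eq_smul_id ℂ φ
  refine ⟨c, ?_⟩
  have h2 := congrArg Action.Hom.hom hc
  rw [Action.smul_hom] at h2
  have h3 := congrArg (fun f => f.hom.hom) h2
  exact h3.symm

theorem id_ne_zero (hV : Simple V) : (LinearMap.id : V →ₗ[ℂ] V) ≠ 0 := by
  haveI := hV
  intro h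
  refine CategoryTheory.id_nonzero V ?_
  ext1; ext1
  exact h

theorem scal_cancel (hV : Simple V) (x y : ℂ)
    (h : x • (1 : V →ₗ[ℂ] V) = y • 1) : x = y := by
  rw [Module.End.one_eq_id] at h
  have h2 : (x - y) • (LinearMap.id : V →ₗ[ℂ] V) = 0 := by
    rw [sub_smul, h, sub_self]
  rcases smul_eq_zero.mp h2 with h3 | h3
  · exact sub_eq_zero.mp h3
  · exact absurd h3 (id_ne_zero V hV)

theorem trace_Tsum (C : Finset G4) :
    LinearMap.trace ℂ V (Tsum V C) = ∑ h ∈ C, V.character h := by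
  rw [Tsum, map_sum]; rfl

theorem Tsum_mul (A B : Finset G4) :
    (Tsum V A) * (Tsum V B) = ∑ g : G4, cnt A B g • V.ρ g := by
  unfold Tsum
  rw [Finset.sum_mul]
  have h1 : ∀ x ∈ A, (V.ρ x : V →ₗ[ℂ] V) * (∑ h ∈ B, V.ρ h) = ∑ h ∈ B, V.ρ (x * h) := by
    intro x _
    rw [Finset.mul_sum]
    exact Finset.sum_congr rfl fun y _ => (map_mul V.ρ x y).symm
  rw [Finset.sum_congr rfl h1, ← Finset.sum_product']
  rw [Finset.sum_comp]
  refine Finset.sum_subset (Finset.subset_univ _) ?_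
  intro g _ hg
  have hc0 : cnt A B g = 0 := by
    rw [cnt, Finset.card_eq_zero, Finset.filter_eq_empty_iff]
    intro p hp hc
    exact hg (Finset.mem_image.mpr ⟨p, hp, hc⟩)
  rw [show #({a ∈ A ×ˢ B | a.1 * a.2 = g}) = cnt A B g from rfl, hc0, zero_smul]

theorem split_sum (s : Finset G4) (k : ℕ) :
    ∑ g : G4, (if g ∈ s then k else 0) • V.ρ g = k • Tsum V s := by
  unfold Tsum
  have h2 : ∀ g : G4, (if g ∈ s then k else 0) • (V.ρ g : V →ₗ[ℂ] V)
      = if g ∈ s then k • (V.ρ g : V →ₗ[ℂ] V) else 0 := by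
    intro g; by_cases h : g ∈ s
    · rw [if_pos h, if_pos h]
    · rw [if_neg h, if_neg h, zero_smul]
  rw [Finset.sum_congr rfl fun g _ => h2 g, Finset.sum_ite_mem, Finset.univ_inter,
    Finset.smul_sum]

theorem split_one (k : ℕ) :
    ∑ g : G4, (if g = 1 then k else 0) • V.ρ g = k • (LinearMap.id : V →ₗ[ℂ] V) := by
  have h2 : ∀ g : G4, (if g = 1 then k else 0) • (V.ρ g : V →ₗ[ℂ] V)
      = if g = 1 then k • (V.ρ g : V →ₗ[ℂ] V) else 0 := by
    intro g; by_cases h : g = 1 <;> simp [h]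
  rw [Finset.sum_congr rfl fun g _ => h2 g, Finset.sum_ite_eq' univ 1
    (fun g => k • (V.ρ g : V →ₗ[ℂ] V))]
  rw [if_pos (Finset.mem_univ (1 : G4)), map_one, Module.End.one_eq_id]

theorem combo (k0 kt k2 k3 k4 : ℕ) (A B : Finset G4)
    (hm : ∀ g, cnt A B g = coef k0 kt k2 k3 k4 g) :
    (Tsum V A) * (Tsum V B) = (k0 : ℂ) • (1 : V →ₗ[ℂ] V)
      + (kt : ℂ) • Tsum V TRs + (k2 : ℂ) • Tsum V DTs
      + (k3 : ℂ) • Tsum V C3s + (k4 : ℂ) • Tsum V C4s := by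
  rw [Tsum_mul, Finset.sum_congr rfl fun g _ => by rw [hm g]]
  have h2 : ∀ g : G4, (coef k0 kt k2 k3 k4 g) • (V.ρ g : V →ₗ[ℂ] V)
      = (if g = 1 then k0 else 0) • (V.ρ g : V →ₗ[ℂ] V)
        + (if g ∈ TRs then kt else 0) • (V.ρ g : V →ₗ[ℂ] V)
        + (if g ∈ DTs then k2 else 0) • (V.ρ g : V →ₗ[ℂ] V)
        + (if g ∈ C3s then k3 else 0) • (V.ρ g : V →ₗ[ℂ] V)
        + (if g ∈ C4s then k4 else 0) • (V.ρ g : V →ₗ[ℂ] V) := by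
    intro g
    rw [coef, add_smul, add_smul, add_smul, add_smul]
  rw [Finset.sum_congr rfl fun g _ => h2 g]
  rw [Finset.sum_add_distrib, Finset.sum_add_distrib, Finset.sum_add_distrib,
    Finset.sum_add_distrib]
  rw [split_one, split_sum, split_sum, split_sum, split_sum, ← Module.End.one_eq_id]
  rw [Nat.cast_smul_eq_nsmul ℂ k0, Nat.cast_smul_eq_nsmul ℂ kt, Nat.cast_smul_eq_nsmul ℂ k2,
    Nat.cast_smul_eq_nsmul ℂ k3, Nat.cast_smul_eq_nsmul ℂ k4]

theorem main (V : FDRep ℂ G4) (hV : Simple V) :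
    (∑ g : G4, gelfandModelCharS4 g * V.character g⁻¹) = 24 := by
  haveI := hV
  set a := Module.finrank ℂ V with hadef
  set α := ((a : ℕ) : ℂ) with hαdef
  set β := V.character t₀ with hβdef
  set γ := V.character d₀ with hγdef
  set δ := V.character c₀ with hδdef
  set ε := V.character q₀ with hεdef
  have hchar1 : V.character 1 = α := by
    rw [hαdef, hadef]; exact_mod_cast FDRep.char_one V
  have trace1 : LinearMap.trace ℂ V (1 : V →ₗ[ℂ] V) = α := by
    rw [LinearMap.trace_one, hαdef, hadef]
  -- constancy of the character on each class
  have constTR : ∀ g ∈ TRs, V.character g = β := by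
    intro g hg; obtain ⟨h, hh⟩ := conjTR g hg; rw [← hh, hβdef]; exact FDRep.char_conj V t₀ h
  have constDT : ∀ g ∈ DTs, V.character g = γ := by
    intro g hg; obtain ⟨h, hh⟩ := conjDT g hg; rw [← hh, hγdef]; exact FDRep.char_conj V d₀ h
  have constC3 : ∀ g ∈ C3s, V.character g = δ := by
    intro g hg; obtain ⟨h, hh⟩ := conjC3 g hg; rw [← hh, hδdef]; exact FDRep.char_conj V c₀ h
  have constC4 : ∀ g ∈ C4s, V.character g = ε := by
    intro g hg; obtain ⟨h, hh⟩ := conjC4 g hg; rw [← hh, hεdef]; exact FDRep.char_conj V q₀ h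
  have invχTR : ∀ g ∈ TRs, V.character g⁻¹ = β := by
    intro g hg; rw [invTR g hg]; exact constTR g hg
  have invχDT : ∀ g ∈ DTs, V.character g⁻¹ = γ := by
    intro g hg; rw [invDT g hg]; exact constDT g hg
  have invχC3 : ∀ g ∈ C3s, V.character g⁻¹ = δ := by
    intro g hg; exact constC3 g⁻¹ (invC3 g hg)
  have invχC4 : ∀ g ∈ C4s, V.character g⁻¹ = ε := by
    intro g hg; exact constC4 g⁻¹ (invC4 g hg)
  -- class sums act by scalars
  obtain ⟨ct, hct⟩ := exists_scalar V hV TRs closTR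
  obtain ⟨c2, hc2⟩ := exists_scalar V hV DTs closDT
  obtain ⟨c3, hc3⟩ := exists_scalar V hV C3s closC3
  obtain ⟨c4, hc4⟩ := exists_scalar V hV C4s closC4
  -- trace equations
  have sumTR : ∑ g ∈ TRs, V.character g = 6 * β := by
    rw [Finset.sum_congr rfl constTR, Finset.sum_const, cardTR, nsmul_eq_mul]; norm_num
  have sumDT : ∑ g ∈ DTs, V.character g = 3 * γ := by
    rw [Finset.sum_congr rfl constDT, Finset.sum_const, cardDT, nsmul_eq_mul]; norm_num
  have sumC3 : ∑ g ∈ C3s, V.character g = 8 * δ := by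
    rw [Finset.sum_congr rfl constC3, Finset.sum_const, cardC3, nsmul_eq_mul]; norm_num
  have sumC4 : ∑ g ∈ C4s, V.character g = 6 * ε := by
    rw [Finset.sum_congr rfl constC4, Finset.sum_const, cardC4, nsmul_eq_mul]; norm_num
  have trTR : 6 * β = ct * α := by
    rw [← sumTR, ← trace_Tsum, hct, map_smul, smul_eq_mul, trace1]
  have trDT : 3 * γ = c2 * α := by
    rw [← sumDT, ← trace_Tsum, hc2, map_smul, smul_eq_mul, trace1]
  have trC3 : 8 * δ = c3 * α := by
    rw [← sumC3, ← trace_Tsum, hc3, map_smul, smul_eq_mul, trace1]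
  have trC4 : 6 * ε = c4 * α := by
    rw [← sumC4, ← trace_Tsum, hc4, map_smul, smul_eq_mul, trace1]
  -- the four class-algebra relations
  have extract : ∀ (k0 kt k2 k3 k4 : ℕ) (A B : Finset G4) (x y : ℂ),
      Tsum V A = x • (1 : V →ₗ[ℂ] V) → Tsum V B = y • (1 : V →ₗ[ℂ] V) →
      (∀ g, cnt A B g = coef k0 kt k2 k3 k4 g) →
      x * y = k0 + kt * ct + k2 * c2 + k3 * c3 + k4 * c4 := by
    intro k0 kt k2 k3 k4 A B x y hA hB hm
    have h := combo V k0 kt k2 k3 k4 A B hm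
    rw [hA, hB, hct, hc2, hc3, hc4] at h
    rw [smul_mul_smul_comm, one_mul] at h
    rw [smul_smul, smul_smul, smul_smul, smul_smul] at h
    rw [← add_smul, ← add_smul, ← add_smul, ← add_smul] at h
    exact scal_cancel V hV _ _ h
  have E1 : c2 * c2 = 3 + 2 * c2 := by
    have h := extract 3 0 2 0 0 DTs DTs c2 c2 hc2 hc2 cntDD
    push_cast at h; linear_combination h
  have E2 : c3 * c3 = 8 + 8 * c2 + 4 * c3 := by
    have h := extract 8 0 8 4 0 C3s C3s c3 c3 hc3 hc3 cntCC
    push_cast at h; linear_combination h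
  have E3 : ct * ct = 6 + 2 * c2 + 3 * c3 := by
    have h := extract 6 0 2 3 0 TRs TRs ct ct hct hct cntTT
    push_cast at h; linear_combination h
  have E4 : ct * c2 = ct + 2 * c4 := by
    have h := extract 0 1 0 0 2 TRs DTs ct c2 hct hc2 cntTD
    push_cast at h; linear_combination h
  -- orthonormality
  have horth := FDRep.char_orthonormal V V
  rw [if_pos ⟨Iso.refl V⟩] at horth
  have hsum24 : ∑ g : G4, V.character g * V.character g⁻¹ = 24 := by
    rw [Nat.card_eq_fintype_card, card24] at horth
    linear_combination 24 * horth
  have E5 : α * α + 6 * (β * β) + 3 * (γ * γ) + 8 * (δ * δ) + 6 * (ε * ε) = 24 := by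
    rw [← hsum24, cover]
    rw [Finset.sum_union disj4, Finset.sum_union disj3, Finset.sum_union disj2,
      Finset.sum_union disj1]
    have p0 : ∑ g ∈ ({1} : Finset G4), V.character g * V.character g⁻¹ = α * α := by
      rw [Finset.sum_singleton, inv_one, hchar1]
    have pTR : ∑ g ∈ TRs, V.character g * V.character g⁻¹ = 6 * (β * β) := by
      rw [Finset.sum_congr rfl fun g hg => by rw [constTR g hg, invχTR g hg],
        Finset.sum_const, cardTR, nsmul_eq_mul]; norm_num
    have pDT : ∑ g ∈ DTs, V.character g * V.character g⁻¹ = 3 * (γ * γ) := by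
      rw [Finset.sum_congr rfl fun g hg => by rw [constDT g hg, invχDT g hg],
        Finset.sum_const, cardDT, nsmul_eq_mul]; norm_num
    have pC3 : ∑ g ∈ C3s, V.character g * V.character g⁻¹ = 8 * (δ * δ) := by
      rw [Finset.sum_congr rfl fun g hg => by rw [constC3 g hg, invχC3 g hg],
        Finset.sum_const, cardC3, nsmul_eq_mul]; norm_num
    have pC4 : ∑ g ∈ C4s, V.character g * V.character g⁻¹ = 6 * (ε * ε) := by
      rw [Finset.sum_congr rfl fun g hg => by rw [constC4 g hg, invχC4 g hg],
        Finset.sum_const, cardC4, nsmul_eq_mul]; norm_num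
    rw [p0, pTR, pDT, pC3, pC4]
  -- the sum to be computed
  have hS : (∑ g : G4, gelfandModelCharS4 g * V.character g⁻¹)
      = 10 * α + 6 * γ + 8 * δ := by
    have hpt : ∀ g : G4, gelfandModelCharS4 g * V.character g⁻¹
        = (if g = 1 then (10 : ℂ) * V.character g⁻¹ else 0)
          + (if g ∈ DTs then (2 : ℂ) * V.character g⁻¹ else 0)
          + (if g ∈ C3s then V.character g⁻¹ else 0) := by
      intro g
      rw [charA g, e0]
      by_cases h1 : g = 1
      · subst h1
        rw [if_pos rfl, if_pos rfl, if_neg notDT1, if_neg notDT1, if_neg notC31,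
          if_neg notC31]
        push_cast; ring
      · rw [if_neg h1, if_neg h1]
        by_cases h2 : g ∈ DTs
        · rw [if_pos h2, if_pos h2, if_neg (DTnotC3 g h2), if_neg (DTnotC3 g h2)]
          push_cast; ring
        · rw [if_neg h2, if_neg h2]
          by_cases h3 : g ∈ C3s
          · rw [if_pos h3, if_pos h3]; push_cast; ring
          · rw [if_neg h3, if_neg h3]; push_cast; ring
    have sDT : ∑ g ∈ DTs, (2 : ℂ) * V.character g⁻¹ = 6 * γ := by
      have hconst : ∀ g ∈ DTs, (2 : ℂ) * V.character g⁻¹ = 2 * γ := fun g hg => by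
        rw [invχDT g hg]
      rw [Finset.sum_congr rfl hconst, Finset.sum_const, cardDT, nsmul_eq_mul]; ring
    have sC3 : ∑ g ∈ C3s, V.character g⁻¹ = 8 * δ := by
      rw [Finset.sum_congr rfl invχC3, Finset.sum_const, cardC3, nsmul_eq_mul]; norm_num
    rw [Finset.sum_congr rfl fun g _ => hpt g]
    rw [Finset.sum_add_distrib, Finset.sum_add_distrib]
    rw [Finset.sum_ite_eq' Finset.univ (1 : G4)
      (fun g => (10 : ℂ) * V.character g⁻¹), if_pos (Finset.mem_univ (1 : G4))]
    rw [Finset.sum_ite_mem, Finset.univ_inter, Finset.sum_ite_mem, Finset.univ_inter]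
    rw [sDT, sC3, inv_one, hchar1]
  rw [hS]
  -- now pure algebra
  have hcase2 : (c2 - 3) * (c2 + 1) = 0 := by linear_combination E1
  have h36β : 36 * (β * β) = (ct * ct) * (α * α) := by linear_combination (6 * β + ct * α) * trTR
  have h36ε : 36 * (ε * ε) = (c4 * c4) * (α * α) := by linear_combination (6 * ε + c4 * α) * trC4
  have natneg : ∀ k : ℕ, 0 < k → α + k ≠ 0 := by
    intro k hk hzero
    rw [hαdef] at hzero
    have : ((a + k : ℕ) : ℂ) = 0 := by push_cast; linear_combination hzero
    have := Nat.cast_eq_zero.mp this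
    omega
  rcases mul_eq_zero.mp hcase2 with hc2v | hc2v
  · -- c2 = 3
    have hc2v : c2 = 3 := by linear_combination hc2v
    have hcase3 : (c3 - 8) * (c3 + 4) = 0 := by linear_combination E2 + 8 * hc2v
    have hc4v : c4 = ct := by linear_combination (-1/2) * E4 + (ct / 2) * hc2v
    rcases mul_eq_zero.mp hcase3 with hc3v | hc3v
    · -- c3 = 8 : trivial or sign representation
      have hc3v : c3 = 8 := by linear_combination hc3v
      have hγv : γ = α := by linear_combination trDT / 3 + (α / 3) * hc2v
      have hδv : δ = α := by linear_combination trC3 / 8 + (α / 8) * hc3v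
      have hct2 : ct * ct = 36 := by linear_combination E3 + 2 * hc2v + 3 * hc3v
      have hc42 : c4 * c4 = 36 := by linear_combination (c4 + ct) * hc4v + hct2
      have hβ2 : β * β = α * α := by
        linear_combination h36β / 36 + (α * α / 36) * hct2
      have hε2 : ε * ε = α * α := by
        linear_combination h36ε / 36 + (α * α / 36) * hc42
      have hα2 : α * α = 1 := by
        linear_combination E5 / 24 - (1 / 4) * hβ2 - ((γ + α) / 8) * hγv
          - ((δ + α) / 3) * hδv - (1 / 4) * hε2
      have hfac : (α - 1) * (α + 1) = 0 := by linear_combination hα2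
      rcases mul_eq_zero.mp hfac with hαv | hαv
      · have hαv : α = 1 := by linear_combination hαv
        linear_combination 6 * hγv + 8 * hδv + 24 * hαv
      · exact absurd (by linear_combination hαv : α + (1 : ℕ) = 0) (natneg 1 (by norm_num))
    · -- c3 = -4 : the two-dimensional representation
      have hc3v : c3 = -4 := by linear_combination hc3v
      have hγv : γ = α := by linear_combination trDT / 3 + (α / 3) * hc2v
      have hδv : δ = -(α / 2) := by linear_combination trC3 / 8 + (α / 8) * hc3v
      have hct2 : ct * ct = 0 := by linear_combination E3 + 2 * hc2v + 3 * hc3v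
      have hc42 : c4 * c4 = 0 := by linear_combination (c4 + ct) * hc4v + hct2
      have hβ2 : β * β = 0 := by
        linear_combination h36β / 36 + (α * α / 36) * hct2
      have hε2 : ε * ε = 0 := by
        linear_combination h36ε / 36 + (α * α / 36) * hc42
      have hα2 : α * α = 4 := by
        linear_combination E5 / 6 - hβ2 - ((γ + α) / 2) * hγv
          - (4 / 3) * (δ - α / 2) * hδv - hε2
      have hfac : (α - 2) * (α + 2) = 0 := by linear_combination hα2
      rcases mul_eq_zero.mp hfac with hαv | hαv
      · have hαv : α = 2 := by linear_combination hαv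
        linear_combination 6 * hγv + 8 * hδv + 12 * hαv
      · exact absurd (by linear_combination hαv : α + (2 : ℕ) = 0) (natneg 2 (by norm_num))
  · -- c2 = -1
    have hc2v : c2 = -1 := by linear_combination hc2v
    have hcase3 : c3 * (c3 - 4) = 0 := by linear_combination E2 + 8 * hc2v
    have hc4v : c4 = -ct := by linear_combination (-1/2) * E4 + (ct / 2) * hc2v
    have hγv : γ = -(α / 3) := by linear_combination trDT / 3 + (α / 3) * hc2v
    rcases mul_eq_zero.mp hcase3 with hc3v | hc3v
    · -- c3 = 0 : the standard representations
      have hδv : δ = 0 := by linear_combination trC3 / 8 + (α / 8) * hc3v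
      have hct2 : ct * ct = 4 := by linear_combination E3 + 2 * hc2v + 3 * hc3v
      have hc42 : c4 * c4 = 4 := by linear_combination (c4 - ct) * hc4v + hct2
      have hβ2 : β * β = α * α / 9 := by
        linear_combination h36β / 36 + (α * α / 36) * hct2
      have hε2 : ε * ε = α * α / 9 := by
        linear_combination h36ε / 36 + (α * α / 36) * hc42
      have hα2 : α * α = 9 := by
        linear_combination (3 / 8) * E5 - (9 / 4) * hβ2 - (9 / 4) * hε2
          - (9 / 8) * (γ - α / 3) * hγv - 3 * δ * hδv
      have hfac : (α - 3) * (α + 3) = 0 := by linear_combination hα2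
      rcases mul_eq_zero.mp hfac with hαv | hαv
      · have hαv : α = 3 := by linear_combination hαv
        linear_combination 6 * hγv + 8 * hδv + 8 * hαv
      · exact absurd (by linear_combination hαv : α + (3 : ℕ) = 0) (natneg 3 (by norm_num))
    · -- c3 = 4 : impossible
      exfalso
      have hc3v : c3 = 4 := by linear_combination hc3v
      have hδv : δ = α / 2 := by linear_combination trC3 / 8 + (α / 8) * hc3v
      have hct2 : ct * ct = 16 := by linear_combination E3 + 2 * hc2v + 3 * hc3v
      have hc42 : c4 * c4 = 16 := by linear_combination (c4 - ct) * hc4v + hct2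
      have hβ2 : β * β = 4 * (α * α) / 9 := by
        linear_combination h36β / 36 + (α * α / 36) * hct2
      have hε2 : ε * ε = 4 * (α * α) / 9 := by
        linear_combination h36ε / 36 + (α * α / 36) * hc42
      have h13 : 13 * (α * α) = 36 := by
        linear_combination (3 / 2) * E5 - 9 * hβ2 - 9 * hε2
          - (9 / 2) * (γ - α / 3) * hγv - 12 * (δ + α / 2) * hδv
      have hnat : ((13 * (a * a) : ℕ) : ℂ) = ((36 : ℕ) : ℂ) := by
        push_cast
        rw [← hαdef]
        linear_combination h13
      have hdvd : (13 : ℕ) ∣ 36 := ⟨a * a, (Nat.cast_inj.mp hnat).symm⟩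
      norm_num at hdvd

end GelfandS4Aux

/-- The representation of `S₄` with character
`Ind_{C_G((12))}^{S₄}(sgn ⊗ 1) ⊕ Ind_{C_G((12)(34))}^{S₄}(sign) ⊕ 1` is a Gelfand model
for `S₄`: every irreducible representation of `S₄` occurs in it with multiplicity
exactly one. -/
theorem gelfand_model_S4 (V : FDRep ℂ (Equiv.Perm (Fin 4))) (hV : Simple V) :
    (Fintype.card (Equiv.Perm (Fin 4)) : ℂ)⁻¹ *
      ∑ g : Equiv.Perm (Fin 4), gelfandModelCharS4 g * V.character g⁻¹ = 1 := by
  have h24 : ((Fintype.card (Equiv.Perm (Fin 4)) : ℕ) : ℂ) = 24 := GelfandS4Aux.card24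
  rw [h24, GelfandS4Aux.main V hV]
  norm_num
end
end

section
/- The map ψ̃ on the action groupoid A(X, GL₂(𝔽_q)), where X is the set of pairs (u, ω) with u a nonzero vector of 𝔽_q² and ω a nonzero element of Λ²(𝔽_q²), defined by ψ̃(x, g, y) = ψ(b) where x = (u, u∧v), y = (u', u'∧v') for chosen vectors v, v', and b ∈ 𝔽_q is the unique scalar with g(v) = v' + b u', is a multiplicative character of the groupoid: ψ̃(x, hg, z) = ψ̃(y, h, z) · ψ̃(x, g, y) whenever y = g·x and z = h·y. -/
noncomputable section

/-- The wedge product `u ∧ v` of two vectors of `𝔽_q²`, identified with a scalar via the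
standard trivialization of `Λ²(𝔽_q²)`. -/
def wedge {F : Type} [Field F] (u v : Fin 2 → F) : F := u 0 * v 1 - u 1 * v 0

/-- Multiplicativity of the character `ψ̃` of the action groupoid `A(X, GL₂(𝔽_q))`,
where `X` is the set of pairs `(u, ω)`, `u ≠ 0` a vector and `ω ≠ 0` a `2`-vector, with
`g · (u, ω) = (g u, det g · ω)`.  Given chosen vectors `v, v', v''` with `u ∧ v = ω` etc.,
and the unique scalars `b, b', b''` with `g v = v' + b u'`, `h v' = v'' + b' u''`,
`(hg) v = v'' + b'' u''`, one has `ψ̃(x, hg, z) = ψ̃(y, h, z) · ψ̃(x, g, y)`,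
i.e. `ψ(b'') = ψ(b') · ψ(b)`. -/
theorem psi_tilde_multiplicative (F : Type) [Field F] [Fintype F]
    (ψ : AddChar F ℂ)
    (g h : GL (Fin 2) F)
    (u u' u'' : Fin 2 → F) (ω ω' ω'' : F)
    (hu : u ≠ 0) (hω : ω ≠ 0)
    (hy : u' = (g : Matrix (Fin 2) (Fin 2) F).mulVec u ∧
          ω' = (g : Matrix (Fin 2) (Fin 2) F).det * ω)
    (hz : u'' = (h : Matrix (Fin 2) (Fin 2) F).mulVec u' ∧
          ω'' = (h : Matrix (Fin 2) (Fin 2) F).det * ω')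
    (v v' v'' : Fin 2 → F)
    (hv : wedge u v = ω) (hv' : wedge u' v' = ω') (hv'' : wedge u'' v'' = ω'')
    (b b' b'' : F)
    (hb : (g : Matrix (Fin 2) (Fin 2) F).mulVec v = v' + b • u')
    (hb' : (h : Matrix (Fin 2) (Fin 2) F).mulVec v' = v'' + b' • u'')
    (hb'' : ((h * g : GL (Fin 2) F) : Matrix (Fin 2) (Fin 2) F).mulVec v = v'' + b'' • u'') :
    ψ b'' = ψ b' * ψ b := by
  obtain ⟨hy1, hy2⟩ := hy
  obtain ⟨hz1, hz2⟩ := hz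
  -- u'' ≠ 0, since ω'' ≠ 0 and wedge u'' v'' = ω''
  have hdetg : (g : Matrix (Fin 2) (Fin 2) F).det ≠ 0 := by
    have := (Matrix.isUnit_iff_isUnit_det _).mp (Units.isUnit g)
    exact this.ne_zero
  have hdeth : (h : Matrix (Fin 2) (Fin 2) F).det ≠ 0 := by
    have := (Matrix.isUnit_iff_isUnit_det _).mp (Units.isUnit h)
    exact this.ne_zero
  have hω'' : ω'' ≠ 0 := by
    rw [hz2, hy2]
    exact mul_ne_zero hdeth (mul_ne_zero hdetg hω)
  have hu'' : u'' ≠ 0 := by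
    intro h0
    apply hω''
    rw [← hv'', h0]
    simp [wedge]
  -- expand hb''
  have key : v'' + b'' • u'' = v'' + (b' + b) • u'' := by
    rw [← hb'']
    have : ((h * g : GL (Fin 2) F) : Matrix (Fin 2) (Fin 2) F)
        = (h : Matrix (Fin 2) (Fin 2) F) * (g : Matrix (Fin 2) (Fin 2) F) := rfl
    rw [this, ← Matrix.mulVec_mulVec, hb, Matrix.mulVec_add, hb',
      Matrix.mulVec_smul, hz1]
    rw [add_smul]
    abel
  have hbb : b'' = b' + b := by
    have h2 : (b'' - (b' + b)) • u'' = 0 := by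
      have := add_left_cancel key
      rw [sub_smul, this, sub_self]
    rcases smul_eq_zero.mp h2 with h3 | h3
    · exact sub_eq_zero.mp h3
    · exact absurd h3 hu''
  rw [hbb, AddChar.map_add_eq_mul]
end
end

section
/- For the quaternion group Q₈, the Gelfand character (the sum of all irreducible complex characters) is not an integer linear combination of permutation characters: there are no integers a_H, indexed by subgroups H ≤ Q₈, such that the sum of all irreducible characters equals Σ_H a_H · Ind_H^{Q₈}(1). -/
open CategoryTheory

/-- The permutation character of a finite group `G` acting on `G ⧸ H`:
its value at `g` is the number of fixed points of `g` on `G ⧸ H`; this is the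
character induced from the trivial character of `H`. -/
noncomputable def permChar (G : Type) [Group G] (H : Subgroup G) (g : G) : ℂ :=
  (Nat.card {c : G ⧸ H // g • c = c} : ℂ)

section Aux

open Matrix Complex QuaternionGroup

noncomputable abbrev qA : Matrix (Fin 2) (Fin 2) ℂ := !![I, 0; 0, -I]
noncomputable abbrev qB : Matrix (Fin 2) (Fin 2) ℂ := !![0, 1; -1, 0]

lemma qA_sq : qA * qA = -1 := by
  ext i j; fin_cases i <;> fin_cases j <;>
    simp [Matrix.mul_apply, Fin.sum_univ_two, I_mul_I]

lemma qA_pow4 : qA ^ 4 = 1 := by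
  have h2 : qA ^ 2 = -1 := by rw [sq]; exact qA_sq
  have h4 : qA ^ 4 = (qA ^ 2) * (qA ^ 2) := by rw [← pow_add]
  rw [h4, h2]; simp

lemma qB_sq : qB * qB = qA ^ 2 := by
  rw [sq, qA_sq]
  ext i j; fin_cases i <;> fin_cases j <;> simp [Matrix.mul_apply, Fin.sum_univ_two]

lemma qA_mul_qB : qA * qB = qB * qA ^ 3 := by
  have h3 : qA ^ 3 = !![-I, 0; 0, I] := by
    rw [pow_succ, sq, qA_sq]
    ext i j; fin_cases i <;> fin_cases j <;> simp
  rw [h3]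
  ext i j; fin_cases i <;> fin_cases j <;> simp [Matrix.mul_apply, Fin.sum_univ_two]

lemma qA_pow_mod (m : ℕ) : qA ^ (m % 4) = qA ^ m := by
  conv_rhs => rw [← Nat.div_add_mod m 4]
  rw [pow_add, pow_mul, qA_pow4, one_pow, one_mul]

lemma qA_pow_mul_qB (m : ℕ) : qA ^ m * qB = qB * qA ^ (3 * m) := by
  induction m with
  | zero => simp
  | succ k ih =>
    rw [pow_succ, mul_assoc, qA_mul_qB, ← mul_assoc, ih, mul_assoc, ← pow_add]
    ring_nf

lemma zmod_val_add (i j : ZMod (2*2)) : qA ^ (i + j).val = qA ^ i.val * qA ^ j.val := by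
  rw [← pow_add, ← qA_pow_mod (i.val + j.val), ZMod.val_add]

lemma zmod_sub_eq : ∀ j i : ZMod (2*2), j - i = j + 3 * i := by decide

lemma qA_pow_3mul (i : ZMod (2*2)) : qA ^ ((3 * i : ZMod (2*2))).val = qA ^ (3 * i.val) := by
  rw [ZMod.val_mul, qA_pow_mod]
  rfl

lemma val_two : (2 : ZMod (2*2)).val = 2 := by decide

/-- underlying function of the 2-dim representation -/
noncomputable def qM : QuaternionGroup 2 → Matrix (Fin 2) (Fin 2) ℂ
  | .a i => qA ^ i.val
  | .xa i => qB * qA ^ i.val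

lemma qM_mul (g h : QuaternionGroup 2) : qM (g * h) = qM g * qM h := by
  rcases g with i | i <;> rcases h with j | j
  · show qM (.a (i + j)) = _
    simpa [qM] using zmod_val_add i j
  · show qM (.xa (j - i)) = _
    simp only [qM]
    rw [← mul_assoc, qA_pow_mul_qB, mul_assoc, ← pow_add,
      zmod_sub_eq, zmod_val_add, qA_pow_3mul, ← pow_add, Nat.add_comm]
  · show qM (.xa (i + j)) = _
    simp only [qM]
    rw [zmod_val_add, mul_assoc]
  · show qM (.a ((2 : ZMod (2*2)) + j - i)) = _
    simp only [qM]
    rw [mul_assoc, ← mul_assoc (qA ^ i.val), qA_pow_mul_qB, ← mul_assoc, ← mul_assoc,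
      qB_sq, zmod_sub_eq, zmod_val_add, zmod_val_add, qA_pow_3mul, val_two]
    simp only [mul_assoc, ← pow_add]
    congr 1
    ring

noncomputable def qMhom : QuaternionGroup 2 →* Matrix (Fin 2) (Fin 2) ℂ where
  toFun := qM
  map_one' := by show qM (.a 0) = 1; simp [qM]
  map_mul' := qM_mul

noncomputable def qRho : Representation ℂ (QuaternionGroup 2) (Fin 2 → ℂ) :=
  (Matrix.toLinAlgEquiv'.toAlgHom.toMonoidHom).comp qMhom

noncomputable def qW : FDRep ℂ (QuaternionGroup 2) := FDRep.of qRho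

lemma qRho_apply (g : QuaternionGroup 2) : qRho g = Matrix.toLin' (qM g) := rfl

lemma qW_char (g : QuaternionGroup 2) : qW.character g = Matrix.trace (qM g) := by
  show LinearMap.trace ℂ (Fin 2 → ℂ) (qRho g) = _
  rw [qRho_apply, LinearMap.trace_eq_matrix_trace ℂ (Pi.basisFun ℂ (Fin 2)),
    LinearMap.toMatrix_eq_toMatrix', LinearMap.toMatrix'_toLin']

lemma qA_diag : qA = Matrix.diagonal ![I, -I] := by
  ext a b; fin_cases a <;> fin_cases b <;> simp [Matrix.diagonal]

lemma qW_char_xa (i : ZMod (2*2)) : qW.character (.xa i) = 0 := by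
  rw [qW_char]
  show (qB * qA ^ i.val).trace = 0
  rw [qA_diag, Matrix.diagonal_pow]
  simp [Matrix.trace, Matrix.diag, Matrix.mul_apply, Fin.sum_univ_two,
    Matrix.diagonal_apply_ne]

lemma qW_char_a (i : ZMod (2*2)) :
    qW.character (.a i) = (I : ℂ) ^ i.val + (-I) ^ i.val := by
  rw [qW_char]
  show (qA ^ i.val).trace = _
  rw [qA_diag, Matrix.diagonal_pow]
  simp [Matrix.trace, Matrix.diag, Matrix.diagonal_apply_eq, Fin.sum_univ_two]

open CategoryTheory

lemma qW_hom_injective {Y : FDRep ℂ (QuaternionGroup 2)} (f : Y ⟶ qW) [Mono f] :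
    Function.Injective f.hom := by
  have h1 : Mono ((Action.forget (FGModuleCat ℂ) (MonCat.of (QuaternionGroup 2))).map f) :=
    Functor.map_mono _ f
  have h2 : Mono ((forget₂ (FGModuleCat ℂ) (ModuleCat ℂ)).map
      ((Action.forget (FGModuleCat ℂ) (MonCat.of (QuaternionGroup 2))).map f)) :=
    Functor.map_mono _ _
  exact (ModuleCat.mono_iff_injective _).1 h2

lemma qRho_a1 (v : Fin 2 → ℂ) : qRho (.a 1) v = qA.mulVec v := by
  have h : qM (.a (1 : ZMod (2*2))) = qA := by
    show qA ^ (1 : ZMod (2*2)).val = qA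
    have : (1 : ZMod (2*2)).val = 1 := by decide
    rw [this, pow_one]
  rw [qRho_apply, h, Matrix.toLin'_apply]

lemma qRho_xa0 (v : Fin 2 → ℂ) : qRho (.xa 0) v = qB.mulVec v := by
  have h : qM (.xa (0 : ZMod (2*2))) = qB := by
    show qB * qA ^ (0 : ZMod (2*2)).val = qB
    have : (0 : ZMod (2*2)).val = 0 := by decide
    rw [this, pow_zero, mul_one]
  rw [qRho_apply, h, Matrix.toLin'_apply]

lemma qW_invariant_top (p : Submodule ℂ (Fin 2 → ℂ))
    (hinv : ∀ g : QuaternionGroup 2, ∀ v ∈ p, qRho g v ∈ p)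
    (v : Fin 2 → ℂ) (hv : v ∈ p) (hv0 : v ≠ 0) : p = ⊤ := by
  have hw : qA.mulVec v ∈ p := by rw [← qRho_a1]; exact hinv _ v hv
  have hu0 : (I • v + qA.mulVec v) ∈ p := p.add_mem (p.smul_mem I hv) hw
  have hu1 : (I • v - qA.mulVec v) ∈ p := p.sub_mem (p.smul_mem I hv) hw
  have hval0 : I • v + qA.mulVec v = (2 * I * v 0) • ![1, 0] := by
    funext x; fin_cases x <;>
      simp [Matrix.mulVec, dotProduct, Fin.sum_univ_two] <;> ring
  have hval1 : I • v - qA.mulVec v = (2 * I * v 1) • ![0, 1] := by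
    funext x; fin_cases x <;>
      simp [Matrix.mulVec, dotProduct, Fin.sum_univ_two] <;> ring
  have hB0 : qB.mulVec ![1, 0] = -![0, 1] := by
    funext x; fin_cases x <;> simp [Matrix.mulVec, dotProduct, Fin.sum_univ_two]
  have hB1 : qB.mulVec ![0, 1] = ![1, 0] := by
    funext x; fin_cases x <;> simp [Matrix.mulVec, dotProduct, Fin.sum_univ_two]
  have key : (![1, 0] : Fin 2 → ℂ) ∈ p ∧ (![0, 1] : Fin 2 → ℂ) ∈ p := by
    have hcase : v 0 ≠ 0 ∨ v 1 ≠ 0 := by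
      by_contra h
      push_neg at h
      apply hv0
      funext x; fin_cases x <;> simp [h.1, h.2]
    rcases hcase with h0 | h1
    · have he0 : (![1, 0] : Fin 2 → ℂ) ∈ p := by
        have := p.smul_mem (2 * I * v 0)⁻¹ (hval0 ▸ hu0)
        rwa [smul_smul, inv_mul_cancel₀ (by simp [h0, I_ne_zero]), one_smul] at this
      refine ⟨he0, ?_⟩
      have := hinv (.xa 0) _ he0
      rw [qRho_xa0, hB0] at this
      simpa using p.neg_mem this
    · have he1 : (![0, 1] : Fin 2 → ℂ) ∈ p := by
        have := p.smul_mem (2 * I * v 1)⁻¹ (hval1 ▸ hu1)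
        rwa [smul_smul, inv_mul_cancel₀ (by simp [h1, I_ne_zero]), one_smul] at this
      refine ⟨?_, he1⟩
      have := hinv (.xa 0) _ he1
      rwa [qRho_xa0, hB1] at this
  rw [Submodule.eq_top_iff']
  intro u
  have : u = u 0 • ![1, 0] + u 1 • ![0, 1] := by
    funext x; fin_cases x <;> simp
  rw [this]
  exact p.add_mem (p.smul_mem _ key.1) (p.smul_mem _ key.2)

noncomputable instance qW_simple : Simple qW := by
  constructor
  intro Y f hmono
  constructor
  · intro hiso h0
    rw [h0] at hiso
    have hid : (𝟙 qW : qW ⟶ qW) = 0 := by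
      rw [← IsIso.inv_hom_id (0 : Y ⟶ qW), Limits.comp_zero]
    have h2 := congrArg Action.Hom.hom hid
    rw [Action.id_hom, Action.zero_hom] at h2
    have h3 : (![1, 0] : Fin 2 → ℂ) = 0 := congrArg (fun φ : qW.V ⟶ qW.V => ConcreteCategory.hom φ ![1, 0]) h2
    have h4 := congrFun h3 0
    simp at h4
  · intro hne
    have hinj : Function.Injective f.hom := qW_hom_injective f
    have hhom_ne : (ConcreteCategory.hom f.hom : Y.V →ₗ[ℂ] (Fin 2 → ℂ)) ≠ 0 := by
      intro h
      apply hne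
      ext1
      ext x
      have hx := LinearMap.congr_fun h x
      simp at hx ⊢
      exact hx
    obtain ⟨y, hy⟩ : ∃ y, (ConcreteCategory.hom f.hom : Y.V →ₗ[ℂ] (Fin 2 → ℂ)) y ≠ 0 := by
      by_contra h
      push_neg at h
      exact hhom_ne (LinearMap.ext h)
    have hinv : ∀ g : QuaternionGroup 2, ∀ v ∈ LinearMap.range (ConcreteCategory.hom f.hom : Y.V →ₗ[ℂ] (Fin 2 → ℂ)),
        qRho g v ∈ LinearMap.range (ConcreteCategory.hom f.hom : Y.V →ₗ[ℂ] (Fin 2 → ℂ)) := by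
      rintro g v ⟨u, rfl⟩
      refine ⟨Y.ρ g u, ?_⟩
      have hc : f.hom (Y.ρ g u) = qRho g (f.hom u) := congrArg (fun φ : Y.V ⟶ qW.V => ConcreteCategory.hom φ u) (f.comm g)
      exact hc
    have htop := qW_invariant_top _ hinv _ ⟨y, rfl⟩ hy
    have hsurj : Function.Surjective (ConcreteCategory.hom f.hom : Y.V →ₗ[ℂ] (Fin 2 → ℂ)) := by
      rw [← LinearMap.range_eq_top]
      exact htop
    let e : (Y.V : Type) ≃ₗ[ℂ] (Fin 2 → ℂ) :=
      LinearEquiv.ofBijective (ConcreteCategory.hom f.hom : Y.V →ₗ[ℂ] (Fin 2 → ℂ)) ⟨hinj, hsurj⟩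
    have : IsIso f.hom := by
      refine ⟨⟨(ConcreteCategory.ofHom e.symm.toLinearMap : qW.V ⟶ Y.V), ?_, ?_⟩⟩
      · ext u
        exact e.symm_apply_apply u
      · ext u
        exact e.apply_symm_apply u
    exact Action.isIso_of_hom_isIso f

noncomputable def qf : Fin 8 → QuaternionGroup 2 :=
  ![.a 0, .a 1, .a 2, .a 3, .xa 0, .xa 1, .xa 2, .xa 3]

lemma qf_bij : Function.Bijective qf := by decide

lemma char_a0 : qW.character (.a 0) = 2 := by
  rw [qW_char_a]
  have : (0 : ZMod (2*2)).val = 0 := by decide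
  rw [this]; norm_num

lemma char_a1 : qW.character (.a 1) = 0 := by
  rw [qW_char_a]
  have : (1 : ZMod (2*2)).val = 1 := by decide
  rw [this]; ring

lemma char_a2 : qW.character (.a 2) = -2 := by
  rw [qW_char_a]
  have : (2 : ZMod (2*2)).val = 2 := by decide
  rw [this]
  have := Complex.I_sq
  ring_nf
  rw [Complex.I_sq]
  ring

lemma char_a3 : qW.character (.a 3) = 0 := by
  rw [qW_char_a]
  have : (3 : ZMod (2*2)).val = 3 := by decide
  rw [this]
  ring

lemma qsum (p : QuaternionGroup 2 → ℂ) :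
    ∑ g : QuaternionGroup 2, p g * qW.character g⁻¹
      = 2 * p (.a 0) - 2 * p (.a 2) := by
  rw [← Fintype.sum_bijective qf qf_bij _ (fun g => p g * qW.character g⁻¹) (fun i => rfl)]
  rw [Fin.sum_univ_eight]
  have e0 : qf 0 = .a 0 := rfl
  have e1 : qf 1 = .a 1 := rfl
  have e2 : qf 2 = .a 2 := rfl
  have e3 : qf 3 = .a 3 := rfl
  have e4 : qf 4 = .xa 0 := rfl
  have e5 : qf 5 = .xa 1 := rfl
  have e6 : qf 6 = .xa 2 := rfl
  have e7 : qf 7 = .xa 3 := rfl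
  rw [e0, e1, e2, e3, e4, e5, e6, e7]
  show p (.a 0) * qW.character (.a 0)⁻¹ + p (.a 1) * qW.character (.a 1)⁻¹
      + p (.a 2) * qW.character (.a 2)⁻¹ + p (.a 3) * qW.character (.a 3)⁻¹
      + p (.xa 0) * qW.character (.xa 0)⁻¹ + p (.xa 1) * qW.character (.xa 1)⁻¹
      + p (.xa 2) * qW.character (.xa 2)⁻¹ + p (.xa 3) * qW.character (.xa 3)⁻¹ = _
  have i0 : ((.a 0 : QuaternionGroup 2))⁻¹ = .a 0 := by decide
  have i1 : ((.a 1 : QuaternionGroup 2))⁻¹ = .a 3 := by decide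
  have i2 : ((.a 2 : QuaternionGroup 2))⁻¹ = .a 2 := by decide
  have i3 : ((.a 3 : QuaternionGroup 2))⁻¹ = .a 1 := by decide
  have i4 : ((.xa 0 : QuaternionGroup 2))⁻¹ = .xa 2 := by decide
  have i5 : ((.xa 1 : QuaternionGroup 2))⁻¹ = .xa 3 := by decide
  have i6 : ((.xa 2 : QuaternionGroup 2))⁻¹ = .xa 0 := by decide
  have i7 : ((.xa 3 : QuaternionGroup 2))⁻¹ = .xa 1 := by decide
  rw [i0, i1, i2, i3, i4, i5, i6, i7, char_a0, char_a1, char_a2, char_a3,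
    qW_char_xa, qW_char_xa, qW_char_xa, qW_char_xa]
  ring

abbrev zq : QuaternionGroup 2 := .a 2

lemma zq_central : ∀ g : QuaternionGroup 2, g⁻¹ * (zq * g) = zq := by decide

lemma zq_sq : ∀ g : QuaternionGroup 2, g = 1 ∨ g = zq ∨ g ^ 2 = zq := by decide

lemma permChar_one (H : Subgroup (QuaternionGroup 2)) :
    permChar _ H 1 = (Nat.card (QuaternionGroup 2 ⧸ H) : ℂ) := by
  unfold permChar
  congr 1
  exact Nat.card_congr (Equiv.subtypeUnivEquiv (fun c => one_smul _ c))

lemma permChar_z_mem (H : Subgroup (QuaternionGroup 2)) (hz : zq ∈ H) :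
    permChar _ H zq = permChar _ H 1 := by
  unfold permChar
  congr 1
  apply Nat.card_congr
  refine Equiv.subtypeEquiv (Equiv.refl _) fun c => ?_
  simp only [Equiv.refl_apply]
  constructor
  · intro _; exact one_smul _ c
  · intro _
    induction c using QuotientGroup.induction_on with
    | H g =>
      show ((zq * g : QuaternionGroup 2) : _ ⧸ H) = g
      rw [QuotientGroup.eq]
      have : (zq * g)⁻¹ * g = (g⁻¹ * (zq * g))⁻¹ := by group
      rw [this, zq_central]
      exact H.inv_mem hz

lemma permChar_z_notmem (H : Subgroup (QuaternionGroup 2)) (hz : zq ∉ H) :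
    permChar _ H zq = 0 := by
  unfold permChar
  have : IsEmpty {c : QuaternionGroup 2 ⧸ H // zq • c = c} := by
    constructor
    rintro ⟨c, hc⟩
    induction c using QuotientGroup.induction_on with
    | H g =>
      apply hz
      have hc' : ((zq * g : QuaternionGroup 2) : _ ⧸ H) = g := hc
      rw [QuotientGroup.eq] at hc'
      have he : (zq * g)⁻¹ * g = (g⁻¹ * (zq * g))⁻¹ := by group
      rw [he, zq_central] at hc'
      simpa using H.inv_mem hc'
  rw [Nat.card_of_isEmpty]
  norm_num

lemma bot_of_z_notmem (H : Subgroup (QuaternionGroup 2)) (hz : zq ∉ H) : H = ⊥ := by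
  rw [Subgroup.eq_bot_iff_forall]
  intro x hx
  rcases zq_sq x with h | h | h
  · exact h
  · exact absurd (h ▸ hx) hz
  · exact absurd (h ▸ pow_mem hx 2) hz

lemma card_quot_bot : (Nat.card (QuaternionGroup 2 ⧸ (⊥ : Subgroup (QuaternionGroup 2))) : ℂ) = 8 := by
  rw [Nat.card_congr (QuotientGroup.quotientBot (G := QuaternionGroup 2)).toEquiv]
  rw [Nat.card_eq_fintype_card, QuaternionGroup.card]
  norm_num

open Classical in
noncomputable def eH (H : Subgroup (QuaternionGroup 2)) : ℤ := if zq ∈ H then 0 else 1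

lemma perm_pair (H : Subgroup (QuaternionGroup 2)) :
    ∑ g : QuaternionGroup 2, permChar _ H g * qW.character g⁻¹
      = 16 * ((eH H : ℤ) : ℂ) := by
  rw [qsum]
  by_cases hz : zq ∈ H
  · have he : eH H = 0 := by simp [eH, hz]
    rw [he]
    show 2 * permChar _ H 1 - 2 * permChar _ H zq = _
    rw [permChar_z_mem H hz]
    push_cast
    ring
  · have he : eH H = 1 := by simp [eH, hz]
    rw [he]
    show 2 * permChar _ H 1 - 2 * permChar _ H zq = _
    rw [permChar_z_notmem H hz, permChar_one, bot_of_z_notmem H hz, card_quot_bot]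
    norm_num

theorem qmain
    (ι : Type) [Fintype ι] (V : ι → FDRep ℂ (QuaternionGroup 2))
    (hsimple : ∀ i, Simple (V i))
    (hcomplete : ∀ W : FDRep ℂ (QuaternionGroup 2), Simple W → ∃! i, Nonempty (V i ≅ W)) :
    ¬ ∃ (s : Finset (Subgroup (QuaternionGroup 2))) (a : Subgroup (QuaternionGroup 2) → ℤ),
      ∀ g : QuaternionGroup 2,
        ∑ i, (V i).character g = ∑ H ∈ s, (a H : ℂ) * permChar (QuaternionGroup 2) H g := by
  rintro ⟨s, a, heq⟩
  classical
  haveI hinvcard : Invertible ((Fintype.card (QuaternionGroup 2) : ℂ)) :=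
    invertibleOfNonzero (by rw [QuaternionGroup.card]; norm_num)
  have hcard : ((Fintype.card (QuaternionGroup 2) : ℂ)) = 8 := by
    rw [QuaternionGroup.card]; norm_num
  have horth : ∀ i, ∑ g : QuaternionGroup 2, (V i).character g * qW.character g⁻¹
      = if Nonempty (V i ≅ qW) then (8 : ℂ) else 0 := by
    intro i
    haveI : Simple (V i) := hsimple i
    have h := FDRep.char_orthonormal (k := ℂ) (G := QuaternionGroup 2) (V i) qW
    rw [Nat.card_eq_fintype_card] at h
    have h' : (Fintype.card (QuaternionGroup 2) : ℂ)⁻¹ *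
        (∑ g : QuaternionGroup 2, (V i).character g * qW.character g⁻¹)
        = if Nonempty (V i ≅ qW) then (1 : ℂ) else 0 := by
      exact_mod_cast h
    rw [hcard] at h'
    have h8 : (8 : ℂ) ≠ 0 := by norm_num
    rw [inv_mul_eq_div, div_eq_iff h8] at h'
    rw [h']
    by_cases hn : Nonempty (V i ≅ qW) <;> simp [hn]
  -- pair both sides of heq against the character of qW
  have key : ∑ g : QuaternionGroup 2,
      (∑ i, (V i).character g) * qW.character g⁻¹
      = ∑ g : QuaternionGroup 2,
      (∑ H ∈ s, (a H : ℂ) * permChar (QuaternionGroup 2) H g) * qW.character g⁻¹ := by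
    apply Finset.sum_congr rfl
    intro g _
    rw [heq g]
  have lhs8 : ∑ g : QuaternionGroup 2,
      (∑ i, (V i).character g) * qW.character g⁻¹ = 8 := by
    simp_rw [Finset.sum_mul]
    rw [Finset.sum_comm]
    have : ∀ i, ∑ g : QuaternionGroup 2, (V i).character g * qW.character g⁻¹
        = if i = (hcomplete qW qW_simple).choose then (8 : ℂ) else 0 := by
      intro i
      rw [horth i]
      obtain ⟨hi0, huni⟩ := (hcomplete qW qW_simple).choose_spec
      by_cases hn : Nonempty (V i ≅ qW)
      · rw [if_pos hn, if_pos (huni i hn)]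
      · rw [if_neg hn, if_neg]
        intro he
        exact hn (he ▸ hi0)
    simp_rw [this]
    rw [Finset.sum_ite_eq' Finset.univ]
    simp
  have rhs16 : ∑ g : QuaternionGroup 2,
      (∑ H ∈ s, (a H : ℂ) * permChar (QuaternionGroup 2) H g) * qW.character g⁻¹
      = 16 * ((∑ H ∈ s, a H * eH H : ℤ) : ℂ) := by
    simp_rw [Finset.sum_mul]
    rw [Finset.sum_comm]
    have : ∀ H ∈ s, ∑ g : QuaternionGroup 2,
        (a H : ℂ) * permChar (QuaternionGroup 2) H g * qW.character g⁻¹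
        = (a H : ℂ) * (16 * ((eH H : ℤ) : ℂ)) := by
      intro H _
      rw [← perm_pair H, Finset.mul_sum]
      apply Finset.sum_congr rfl
      intro g _
      ring
    rw [Finset.sum_congr rfl this]
    push_cast
    rw [Finset.mul_sum]
    apply Finset.sum_congr rfl
    intro H _
    ring
  rw [lhs8, rhs16] at key
  have : ((8 : ℤ) : ℂ) = ((16 * (∑ H ∈ s, a H * eH H) : ℤ) : ℂ) := by
    push_cast
    rw [key]
    push_cast
    ring
  have h8 : (8 : ℤ) = 16 * (∑ H ∈ s, a H * eH H) := by exact_mod_cast this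
  omega

end Aux

/-- The Gelfand character of the quaternion group `Q₈` (the sum of all its irreducible
complex characters) is not an integer linear combination of permutation characters
`Ind_H^{Q₈}(1)`, `H` ranging over subgroups of `Q₈`. -/
theorem quaternion_gelfand_not_integer_combination_of_perm_chars
    (ι : Type) [Fintype ι] (V : ι → FDRep ℂ (QuaternionGroup 2))
    (hsimple : ∀ i, Simple (V i))
    (hcomplete : ∀ W : FDRep ℂ (QuaternionGroup 2), Simple W → ∃! i, Nonempty (V i ≅ W)) :
    ¬ ∃ (s : Finset (Subgroup (QuaternionGroup 2))) (a : Subgroup (QuaternionGroup 2) → ℤ),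
      ∀ g : QuaternionGroup 2,
        ∑ i, (V i).character g = ∑ H ∈ s, (a H : ℂ) * permChar (QuaternionGroup 2) H g := by
  exact qmain ι V hsimple hcomplete
end
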